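/- arXiv:1511.03385 — 3 statements merged into one kernel-verified Lean document; each statement's English description precedes it below -/
import Mathlib

section
/- Let N = 2f_C+1, ẑ ∈ ℂ^N a fixed vector, and for ρ ∈ 𝕀^K let G_ρ ∈ ℂ^{N×K} have entries G_ρ[l,i] = ĝ[l]·e^{-i2πl·ρ[i]} (l ∈ 𝔽), with ĝ ∈ ℂ^N fixed. Suppose G_{ρ₀} has full column rank at ρ₀ ∈ 𝕀^K, and let β̃(ρ) = G_ρ†ẑ be the least-squares coefficient vector. Then β̃ is differentiable at ρ₀ and its Jacobian equals ∂β̃/∂ρ(ρ₀) = (G_{ρ₀}*G_{ρ₀})⁻¹·diag(G_{ρ₀}*L(I_N − P_{ρ₀})ẑ) − G_{ρ₀}†L*G_{ρ₀}·diag(β̃(ρ₀)), where P_{ρ₀} = G_{ρ₀}G_{ρ₀}† and L ∈ ℂ^{N×N} is diagonal with L[l,l] = i2πl. -/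
open scoped Real BigOperators
open Matrix MeasureTheory Filter

noncomputable section

/-- Subtraction modulo one on the circle `𝕀 = [0,1)`. -/
def wrapSub (a b : ℝ) : ℝ := Int.fract (a - b)

/-- Wraparound distance on `𝕀`. -/
def wrapDist (a b : ℝ) : ℝ := min (wrapSub a b) (wrapSub b a)

/-- The `L₂(𝕀)` inner product of two real signals. -/
def ipI (f g : ℝ → ℝ) : ℝ := ∫ t in (0:ℝ)..1, f t * g t

/-- The `L₂(𝕀)` norm of a real signal. -/
def l2normI (f : ℝ → ℝ) : ℝ := Real.sqrt (∫ t in (0:ℝ)..1, (f t)^2)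

/-- The `L_∞(𝕀)` norm of a real signal. -/
def linfNormI (f : ℝ → ℝ) : ℝ := sSup ((fun t => |f t|) '' Set.Ico (0:ℝ) 1)

/-- `e^{i2πθ}`. -/
def eI (θ : ℝ) : ℂ := Complex.exp (2 * (Real.pi : ℂ) * Complex.I * (θ : ℂ))

/-- Fourier coefficient `f̂[l] = ⟨f, e^{i2πlt}⟩` of a signal on `𝕀`. -/
def fourierCoeffI (f : ℝ → ℝ) (l : ℤ) : ℂ :=
  ∫ t in (0:ℝ)..1, (f t : ℂ) * eI (-(l * t))

/-- Hausdorff distance (w.r.t. the wraparound metric) between the entry sets of two vectors. -/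
def hausdDist {K₁ K₂ : ℕ} (u : Fin K₁ → ℝ) (v : Fin K₂ → ℝ) : ℝ :=
  max (⨆ i, ⨅ j, wrapDist (u i) (v j)) (⨆ j, ⨅ i, wrapDist (u i) (v j))

def rnorm2 {n : ℕ} (v : Fin n → ℝ) : ℝ := Real.sqrt (∑ i, (v i)^2)

def cnorm2 {n : ℕ} (v : Fin n → ℂ) : ℝ := Real.sqrt (∑ i, ‖v i‖^2)

def rnormInf {n : ℕ} (v : Fin n → ℝ) : ℝ := ⨆ i, |v i|

def cnormInf {n : ℕ} (v : Fin n → ℂ) : ℝ := ⨆ i, ‖v i‖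

/-- Dynamic range `max_i |α i| / min_i |α i|`. -/
def dynRange {n : ℕ} (α : Fin n → ℝ) : ℝ := (⨆ i, |α i|) / (⨅ i, |α i|)

/-- The frequency `l ∈ 𝔽 = [-f_C : f_C]` indexed by `Fin N`, `N = 2 f_C + 1`. -/
def freqIdx (N : ℕ) (l : Fin N) : ℤ := (l : ℤ) - ((N : ℤ) - 1) / 2

/-- The matrix `G_ρ[l,i] = ĝ[l]·e^{-i2πl·ρ[i]}`. -/
def Gmat (N K : ℕ) (ghat : ℤ → ℂ) (ρ : Fin K → ℝ) : Matrix (Fin N) (Fin K) ℂ :=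
  Matrix.of fun l i => ghat (freqIdx N l) * eI (-((freqIdx N l : ℝ) * ρ i))

/-- The diagonal matrix with entries `L[l,l] = i2πl`. -/
def Lmat (N : ℕ) : Matrix (Fin N) (Fin N) ℂ :=
  Matrix.diagonal fun l => 2 * (Real.pi : ℂ) * Complex.I * (freqIdx N l : ℂ)

/-- Moore–Penrose pseudo-inverse `A† = (Aᴴ A)⁻¹ Aᴴ` of a full-column-rank matrix. -/
def pinv {N K : ℕ} (A : Matrix (Fin N) (Fin K) ℂ) : Matrix (Fin K) (Fin N) ℂ :=
  (Aᴴ * A)⁻¹ * Aᴴ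

/-- Orthogonal projection `P = A A†` onto the column span of `A`. -/
def Pmat {N K : ℕ} (A : Matrix (Fin N) (Fin K) ℂ) : Matrix (Fin N) (Fin N) ℂ :=
  A * pinv A

/-- Spectral (ℓ₂ operator) norm of a complex matrix. -/
def specNorm {m n : ℕ} (A : Matrix (Fin m) (Fin n) ℂ) : ℝ :=
  ‖LinearMap.toContinuousLinearMap (Matrix.toEuclideanLin A)‖

/-- Spectral (ℓ₂ operator) norm of a real matrix. -/
def specNormR {m n : ℕ} (A : Matrix (Fin m) (Fin n) ℝ) : ℝ :=
  ‖LinearMap.toContinuousLinearMap (Matrix.toEuclideanLin A)‖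

/-- Criterion 2 for the kernel `g = g_{σ,N}`, `σ = c/N`, with derivative `g'` and constants `C₀, κ`. -/
def Crit2 (N : ℕ) (c : ℝ) (g g' : ℝ → ℝ) (C₀ κ : ℝ) : Prop :=
  ipI g g = 1 ∧
  (∀ t, HasDerivAt g (g' t) t) ∧
  (∀ l : ℤ, 2 * |l| > (N : ℤ) - 1 → fourierCoeffI g l = 0) ∧
  (∀ t ∈ Set.Ico (0:ℝ) 1, g t = g (1 - t)) ∧
  (∀ ρ₁ ∈ Set.Ico (0:ℝ) 1, ∀ ρ₂ ∈ Set.Ico (0:ℝ) 1, 2 * (c / N) ≤ wrapDist ρ₁ ρ₂ →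
    |ipI (fun t => g (wrapSub t ρ₁)) (fun t => g (wrapSub t ρ₂))|
        ≤ C₀ * Real.exp (-(κ * c)) / (N * Real.sin (Real.pi * wrapDist ρ₁ ρ₂)) ∧
    |ipI (fun t => g (wrapSub t ρ₁)) (fun t => g' (wrapSub t ρ₂))|
        ≤ C₀ * Real.exp (-(κ * c)) / Real.sin (Real.pi * wrapDist ρ₁ ρ₂) ∧
    |ipI (fun t => g' (wrapSub t ρ₁)) (fun t => g' (wrapSub t ρ₂))|
        ≤ C₀ * N * Real.exp (-(κ * c)) / Real.sin (Real.pi * wrapDist ρ₁ ρ₂))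

/-- Criterion 3 for the kernel `g = g_{σ,N}`, `σ = c/N`, with flatness radius `h ≤ σ`
and constants `c₁', c₂', C'`. -/
def Crit3 (N : ℕ) (c : ℝ) (g g' : ℝ → ℝ) (h c₁' c₂' C' : ℝ) : Prop :=
  h ≤ c / N ∧
  c₁' * (N:ℝ)^2 ≤ ipI g' g' ∧
  (∀ ρ₁ ∈ Set.Ico (0:ℝ) 1, ∀ ρ₂ ∈ Set.Ico (0:ℝ) 1, wrapDist ρ₁ ρ₂ ≤ h →
    1 - C' * (wrapDist ρ₁ ρ₂)^2 ≤ ipI (fun t => g (wrapSub t ρ₁)) (fun t => g (wrapSub t ρ₂)) ∧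
    c₂' * (N:ℝ)^2 * wrapDist ρ₁ ρ₂
        ≤ |ipI (fun t => g (wrapSub t ρ₁)) (fun t => g' (wrapSub t ρ₂))| ∧
    Real.sign (ipI (fun t => g (wrapSub t ρ₁)) (fun t => g' (wrapSub t ρ₂)))
        = Real.sign (wrapSub ρ₁ ρ₂ - 1/2))

/-- The claimed Jacobian `∂β̃/∂ρ = (GᴴG)⁻¹·diag(GᴴL(I−P)ẑ) − G†L*G·diag(β̃)` of the
least-squares coefficient map. -/
def JmatBt (N K : ℕ) (ghat : ℤ → ℂ) (zh : Fin N → ℂ) (ρ : Fin K → ℝ) :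
    Matrix (Fin K) (Fin K) ℂ :=
  let G := Gmat N K ghat ρ
  (Gᴴ * G)⁻¹ *
      Matrix.diagonal ((Gᴴ * Lmat N * ((1 : Matrix (Fin N) (Fin N) ℂ) - Pmat G)) *ᵥ zh) -
    pinv G * (Lmat N)ᴴ * G * Matrix.diagonal (pinv G *ᵥ zh)

section Helpers

/-- `eI (-(a*s))` as a function of `s : ℝ` has the obvious derivative. -/
lemma hasDerivAt_eI_neg (a x : ℝ) :
    HasDerivAt (fun s : ℝ => eI (-(a * s)))
      (-(2 * (Real.pi : ℂ) * Complex.I * a) * eI (-(a * x))) x := by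
  have h1 : ∀ s : ℝ, eI (-(a * s))
      = Complex.exp ((-(2 * (Real.pi : ℂ) * Complex.I * a)) * (s : ℂ)) := by
    intro s
    unfold eI
    congr 1
    push_cast
    ring
  simp only [h1]
  have h2 : HasDerivAt (fun s : ℝ => ((-(2 * (Real.pi : ℂ) * Complex.I * a)) * (s : ℂ)))
      (-(2 * (Real.pi : ℂ) * Complex.I * a)) x := by
    simpa using
      (Complex.ofRealCLM.hasDerivAt (x := x)).const_mul (-(2 * (Real.pi : ℂ) * Complex.I * a))
  simpa [mul_comm] using h2.cexp

lemma differentiableAt_eI_comp {E : Type*} [NormedAddCommGroup E] [NormedSpace ℝ E]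
    (a : ℝ) {f : E → ℝ} {x : E} (hf : DifferentiableAt ℝ f x) :
    DifferentiableAt ℝ (fun y => eI (-(a * f y))) x := by
  have h1 : ∀ y, eI (-(a * f y))
      = Complex.exp ((-(2 * (Real.pi : ℂ) * Complex.I * a)) * ((f y : ℝ) : ℂ)) := by
    intro y
    unfold eI
    congr 1
    push_cast
    ring
  simp only [h1]
  exact ((Complex.ofRealCLM.differentiableAt.comp x hf).const_mul _).cexp

/-- A determinant of a matrix of differentiable entries is differentiable. -/
lemma differentiableAt_det_comp {n : ℕ} {E : Type*} [NormedAddCommGroup E] [NormedSpace ℝ E]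
    {f : E → Matrix (Fin n) (Fin n) ℂ} {x : E}
    (hf : ∀ p q, DifferentiableAt ℝ (fun y => f y p q) x) :
    DifferentiableAt ℝ (fun y => (f y).det) x := by
  simp only [Matrix.det_apply']
  refine DifferentiableAt.fun_sum fun σ _ => DifferentiableAt.const_mul ?_ _
  have := HasFDerivAt.finset_prod (u := (Finset.univ : Finset (Fin n)))
    (g := fun i y => f y (σ i) i)
    (g' := fun i => fderiv ℝ (fun y => f y (σ i) i) x) (x := x)
    (fun i _ => (hf (σ i) i).hasFDerivAt)
  exact this.differentiableAt

end Helpers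

section Helpers2

lemma gmat_entry_diff (N K : ℕ) (ghat : ℤ → ℂ) (ρ₀ : EuclideanSpace ℝ (Fin K))
    (l : Fin N) (i : Fin K) :
    DifferentiableAt ℝ
      (fun ρ : EuclideanSpace ℝ (Fin K) => Gmat N K ghat (fun i' => ρ i') l i) ρ₀ := by
  simp only [Gmat, Matrix.of_apply]
  refine DifferentiableAt.const_mul ?_ _
  exact differentiableAt_eI_comp _ (EuclideanSpace.proj (𝕜 := ℝ) i).differentiableAt

lemma pinv_mulVec_apply {N K : ℕ} (A : Matrix (Fin N) (Fin K) ℂ) (z : Fin N → ℂ) (i0 : Fin K) :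
    (pinv A *ᵥ z) i0
      = (Aᴴ * A).det⁻¹ * ∑ k, (Aᴴ * A).adjugate i0 k * (Aᴴ *ᵥ z) k := by
  rw [pinv, Matrix.inv_def, Ring.inverse_eq_inv', Matrix.smul_mul,
    Matrix.smul_mulVec]
  simp only [Pi.smul_apply, smul_eq_mul]
  congr 1
  rw [← Matrix.mulVec_mulVec]
  rfl

lemma pinv_mulVec_diff (N K : ℕ) (ghat : ℤ → ℂ) (zhat : Fin N → ℂ)
    (ρ₀ : EuclideanSpace ℝ (Fin K))
    (hdet : ((Gmat N K ghat (fun i => ρ₀ i))ᴴ * Gmat N K ghat (fun i => ρ₀ i)).det ≠ 0) :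
    DifferentiableAt ℝ
      (fun ρ : EuclideanSpace ℝ (Fin K) =>
        pinv (Gmat N K ghat (fun i => ρ i)) *ᵥ zhat) ρ₀ := by
  have hMdiff : ∀ p q : Fin K, DifferentiableAt ℝ
      (fun ρ : EuclideanSpace ℝ (Fin K) =>
        ((Gmat N K ghat (fun i => ρ i))ᴴ * Gmat N K ghat (fun i => ρ i)) p q) ρ₀ := by
    intro p q
    simp only [Matrix.mul_apply, Matrix.conjTranspose_apply]
    exact DifferentiableAt.fun_sum fun l _ =>
      ((gmat_entry_diff N K ghat ρ₀ l p).star).mul (gmat_entry_diff N K ghat ρ₀ l q)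
  have hdetdiff : DifferentiableAt ℝ
      (fun ρ : EuclideanSpace ℝ (Fin K) =>
        ((Gmat N K ghat (fun i => ρ i))ᴴ * Gmat N K ghat (fun i => ρ i)).det) ρ₀ :=
    differentiableAt_det_comp hMdiff
  rw [differentiableAt_pi]
  intro i0
  simp only [pinv_mulVec_apply]
  refine DifferentiableAt.mul (hdetdiff.inv hdet) (DifferentiableAt.fun_sum fun k _ => ?_)
  refine DifferentiableAt.mul ?_ ?_
  · simp only [Matrix.adjugate_apply]
    refine differentiableAt_det_comp ?_
    intro p q
    simp only [Matrix.updateRow_apply]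
    rcases eq_or_ne p k with h | h
    · simp [h]
    · simp only [h, if_false]
      exact hMdiff p q
  · simp only [Matrix.mulVec, dotProduct, Matrix.conjTranspose_apply]
    exact DifferentiableAt.fun_sum fun l _ =>
      ((gmat_entry_diff N K ghat ρ₀ l k).star).mul_const (zhat l)

end Helpers2

lemma hasDerivAt_eI_affine (a c x : ℝ) :
    HasDerivAt (fun s : ℝ => eI (-(a * (c + s))))
      (-(2 * (Real.pi : ℂ) * Complex.I * a) * eI (-(a * (c + x)))) x := by
  have h1 : ∀ s : ℝ, eI (-(a * (c + s)))
      = Complex.exp ((-(2 * (Real.pi : ℂ) * Complex.I * a)) * (s : ℂ)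
          + (-(2 * (Real.pi : ℂ) * Complex.I * a)) * (c : ℂ)) := by
    intro s
    unfold eI
    congr 1
    push_cast
    ring
  simp only [h1]
  have h2 : HasDerivAt
      (fun s : ℝ => ((-(2 * (Real.pi : ℂ) * Complex.I * a)) * (s : ℂ)
          + (-(2 * (Real.pi : ℂ) * Complex.I * a)) * (c : ℂ)))
      (-(2 * (Real.pi : ℂ) * Complex.I * a)) x := by
    simpa using
      ((Complex.ofRealCLM.hasDerivAt (x := x)).const_mul
        (-(2 * (Real.pi : ℂ) * Complex.I * a))).add_const ((-(2 * (Real.pi : ℂ) * Complex.I * a)) * (c : ℂ))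
  simpa [mul_comm] using h2.cexp

open scoped ComplexOrder in
lemma isUnit_det_conjTranspose_mul_self {N K : ℕ} (A : Matrix (Fin N) (Fin K) ℂ)
    (h : A.rank = K) : IsUnit (Aᴴ * A).det := by
  have h1 : (Aᴴ * A).rank = K := by rw [Matrix.rank_conjTranspose_mul_self]; exact h
  have hsurj : Function.Surjective (Aᴴ * A).mulVec := by
    have h2 : LinearMap.range (Aᴴ * A).mulVecLin = ⊤ := by
      apply Submodule.eq_top_of_finrank_eq
      simp only [Matrix.rank] at h1
      rw [h1, Module.finrank_fintype_fun_eq_card, Fintype.card_fin]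
    intro w
    obtain ⟨u, hu⟩ := LinearMap.range_eq_top.mp h2 w
    exact ⟨u, by simpa [Matrix.mulVecLin_apply] using hu⟩
  exact (Matrix.isUnit_iff_isUnit_det _).mp (Matrix.mulVec_surjective_iff_isUnit.mp hsurj)

theorem stmt17_aux
    (N K : ℕ) (ghat : ℤ → ℂ) (zhat : Fin N → ℂ)
    (ρ₀ : EuclideanSpace ℝ (Fin K))
    (hrank : (Gmat N K ghat (fun i => ρ₀ i)).rank = K) :
    DifferentiableAt ℝ
      (fun ρ : EuclideanSpace ℝ (Fin K) =>
        pinv (Gmat N K ghat (fun i => ρ i)) *ᵥ zhat) ρ₀ ∧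
    ∀ j : Fin K,
      HasDerivAt
        (fun s : ℝ =>
          pinv (Gmat N K ghat
            (fun i => (ρ₀ + s • EuclideanSpace.single j (1:ℝ)) i)) *ᵥ zhat)
        (fun i => JmatBt N K ghat zhat (fun i' => ρ₀ i') i j)
        0 := by
  classical
  have hdetU : IsUnit ((Gmat N K ghat (fun i => ρ₀ i))ᴴ * Gmat N K ghat (fun i => ρ₀ i)).det :=
    isUnit_det_conjTranspose_mul_self _ hrank
  set G0 : Matrix (Fin N) (Fin K) ℂ := Gmat N K ghat (fun i => ρ₀ i) with hG0
  set M0 : Matrix (Fin K) (Fin K) ℂ := G0ᴴ * G0 with hM0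
  have hdet0 : M0.det ≠ 0 := hdetU.ne_zero
  have part1 : DifferentiableAt ℝ
      (fun ρ : EuclideanSpace ℝ (Fin K) =>
        pinv (Gmat N K ghat (fun i => ρ i)) *ᵥ zhat) ρ₀ :=
    pinv_mulVec_diff N K ghat zhat ρ₀ hdet0
  refine ⟨part1, ?_⟩
  intro j
  set v1 : EuclideanSpace ℝ (Fin K) := EuclideanSpace.single j (1:ℝ) with hv1
  set g : ℝ → Matrix (Fin N) (Fin K) ℂ :=
    fun s => Gmat N K ghat (fun i => (ρ₀ + s • v1) i) with hg
  have hg00 : g 0 = G0 := by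
    rw [hg, hG0]
    refine congrArg (Gmat N K ghat) ?_
    funext i
    simp
  set Dj : Matrix (Fin K) (Fin K) ℂ := Matrix.diagonal (Pi.single j (1:ℂ)) with hDj
  set G' : Matrix (Fin N) (Fin K) ℂ := (Lmat N)ᴴ * G0 * Dj with hG'
  -- entrywise derivative of g
  have hgE : ∀ (l : Fin N) (i : Fin K), HasDerivAt (fun s => g s l i) (G' l i) 0 := by
    intro l i
    have hval : ∀ s : ℝ, g s l i = ghat (freqIdx N l) *
        eI (-((freqIdx N l : ℝ) * (ρ₀ i + s * (if i = j then 1 else 0)))) := by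
      intro s
      rw [hg]
      simp [Gmat, PiLp.add_apply, PiLp.smul_apply, EuclideanSpace.single_apply,
        smul_eq_mul, hv1]
    have hG'val : G' l i = (if i = j then
        (star (2 * (Real.pi:ℂ) * Complex.I * ((freqIdx N l : ℤ) : ℂ))) * (G0 l i) else 0) := by
      rw [hG', hDj, Lmat, Matrix.diagonal_conjTranspose, Matrix.mul_diagonal,
        Matrix.diagonal_mul]
      by_cases h : i = j <;> simp [h, Pi.single_apply]
    rcases eq_or_ne i j with h | h
    · subst h
      have hgoal : (fun s => g s l i) = fun s : ℝ =>
          ghat (freqIdx N l) * eI (-((freqIdx N l : ℝ) * (ρ₀ i + s))) := by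
        funext s
        rw [hval]
        simp
      have hG'val2 : G' l i = star (2 * (Real.pi:ℂ) * Complex.I * ((freqIdx N l : ℤ) : ℂ))
          * (G0 l i) := by
        rw [hG'val]
        simp
      rw [hgoal, hG'val2]
      have h2 : HasDerivAt (fun s : ℝ => eI (-((freqIdx N l : ℝ) * (ρ₀ i + s))))
          (-(2 * (Real.pi : ℂ) * Complex.I * ((freqIdx N l : ℝ) : ℂ))
            * eI (-((freqIdx N l : ℝ) * (ρ₀ i + 0)))) 0 :=
        hasDerivAt_eI_affine ((freqIdx N l : ℝ)) (ρ₀ i) 0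
      have h3 := h2.const_mul (ghat (freqIdx N l))
      refine h3.congr_deriv ?_
      have hG0li : G0 l i = ghat (freqIdx N l) * eI (-((freqIdx N l : ℝ) * ρ₀ i)) := by
        rw [hG0]; rfl
      rw [hG0li, Complex.star_def]
      simp only [_root_.map_mul, Complex.conj_I, Complex.conj_ofReal, map_ofNat, map_intCast,
        add_zero]
      push_cast
      ring
    · simp only [hval, if_neg h, mul_zero, add_zero, hG'val]
      exact hasDerivAt_const _ _
  -- m and b
  set m : ℝ → Matrix (Fin K) (Fin K) ℂ := fun s => (g s)ᴴ * g s with hm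
  set b : ℝ → (Fin K → ℂ) := fun s => (g s)ᴴ *ᵥ zhat with hb
  set m' : Matrix (Fin K) (Fin K) ℂ := G'ᴴ * G0 + G0ᴴ * G' with hm'
  have hmE : ∀ p q, HasDerivAt (fun s => m s p q) (m' p q) 0 := by
    intro p q
    have h1 : ∀ s, m s p q = ∑ l, star (g s l p) * g s l q := by
      intro s
      rw [hm]
      simp [Matrix.mul_apply, Matrix.conjTranspose_apply]
    simp only [h1]
    have h2 : HasDerivAt (fun s => ∑ l, star (g s l p) * g s l q)
        (∑ l, (star (G' l p) * g 0 l q + star (g 0 l p) * G' l q)) 0 :=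
      HasDerivAt.fun_sum fun l _ => ((hgE l p).star.mul (hgE l q))
    convert h2 using 1
    rw [hm', hg00]
    simp [Matrix.add_apply, Matrix.mul_apply, Matrix.conjTranspose_apply,
      Finset.sum_add_distrib]
  have hbE : ∀ p, HasDerivAt (fun s => b s p) ((G'ᴴ *ᵥ zhat) p) 0 := by
    intro p
    have h1 : ∀ s, b s p = ∑ l, star (g s l p) * zhat l := by
      intro s
      rw [hb]
      simp [Matrix.mulVec, dotProduct, Matrix.conjTranspose_apply]
    simp only [h1]
    have h2 := HasDerivAt.fun_sum (u := Finset.univ)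
      (fun l _ => ((hgE l p).star.mul_const (zhat l)))
    exact h2.congr_deriv rfl
  -- β and its differentiability
  set β : ℝ → (Fin K → ℂ) := fun s => pinv (g s) *ᵥ zhat with hβ
  set β0 : Fin K → ℂ := pinv G0 *ᵥ zhat with hβ0def
  have hβ00 : β 0 = β0 := by
    rw [hβ, hβ0def]
    simp only
    rw [hg00]
  have hβdiff : DifferentiableAt ℝ β 0 := by
    have hline : DifferentiableAt ℝ (fun s : ℝ => ρ₀ + s • v1) 0 :=
      (differentiableAt_id.smul_const v1).const_add ρ₀
    have h0 : ρ₀ + (0:ℝ) • v1 = ρ₀ := by simp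
    have hF : DifferentiableAt ℝ
        (fun ρ : EuclideanSpace ℝ (Fin K) =>
          pinv (Gmat N K ghat (fun i => ρ i)) *ᵥ zhat) (ρ₀ + (0:ℝ) • v1) := by
      rw [h0]; exact part1
    simpa [hβ, hg, Function.comp] using hF.comp (0:ℝ) hline
  obtain ⟨d, hd⟩ : ∃ d, HasDerivAt β d 0 := ⟨_, hβdiff.hasDerivAt⟩
  have hβi : ∀ i, HasDerivAt (fun s => β s i) (d i) 0 := fun i => (hasDerivAt_pi.mp hd) i
  -- eventual identity m *ᵥ β = b
  have hm00 : m 0 = M0 := by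
    rw [hm, hM0]
    simp only
    rw [hg00]
  have hdetm : DifferentiableAt ℝ (fun s => (m s).det) 0 :=
    differentiableAt_det_comp (fun p q => (hmE p q).differentiableAt)
  have hev : ∀ᶠ s in nhds (0:ℝ), (m s).det ≠ 0 :=
    hdetm.continuousAt.eventually_ne (by rw [hm00]; exact hdet0)
  have hEq : (fun s => m s *ᵥ β s) =ᶠ[nhds (0:ℝ)] b := by
    filter_upwards [hev] with s hs
    have hu : IsUnit (m s).det := isUnit_iff_ne_zero.mpr hs
    have hβs : β s = (m s)⁻¹ *ᵥ b s := by
      rw [hβ, hb, hm]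
      simp only
      rw [pinv, ← Matrix.mulVec_mulVec]
    rw [hβs, Matrix.mulVec_mulVec, Matrix.mul_nonsing_inv _ hu, Matrix.one_mulVec]
  -- derivative of m *ᵥ β and uniqueness
  have hmul : HasDerivAt (fun s => m s *ᵥ β s) (M0 *ᵥ d + m' *ᵥ β0) 0 := by
    rw [hasDerivAt_pi]
    intro p
    have h1 : ∀ s, (m s *ᵥ β s) p = ∑ q, m s p q * β s q := by
      intro s
      simp [Matrix.mulVec, dotProduct]
    simp only [h1]
    have h2 := HasDerivAt.fun_sum (u := Finset.univ)
      (fun q _ => (hmE p q).mul (hβi q))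
    refine h2.congr_deriv ?_
    rw [hm00, hβ00]
    simp [Matrix.mulVec, dotProduct, Finset.sum_add_distrib, add_comm]
  have hbvec : HasDerivAt b (G'ᴴ *ᵥ zhat) 0 := hasDerivAt_pi.mpr hbE
  have hmulb : HasDerivAt (fun s => m s *ᵥ β s) (G'ᴴ *ᵥ zhat) 0 :=
    (hEq.hasDerivAt_iff).mpr hbvec
  have hkey : M0 *ᵥ d + m' *ᵥ β0 = G'ᴴ *ᵥ zhat := hmul.unique hmulb
  have hMd : M0 *ᵥ d = G'ᴴ *ᵥ zhat - m' *ᵥ β0 := by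
    rw [← hkey]
    abel
  have hdval : d = M0⁻¹ *ᵥ (G'ᴴ *ᵥ zhat - m' *ᵥ β0) := by
    rw [← hMd, Matrix.mulVec_mulVec, Matrix.nonsing_inv_mul _ hdetU, Matrix.one_mulVec]
  -- matrix algebra for the claimed Jacobian column
  have hDjH : Djᴴ = Dj := by
    have hstar : star (Pi.single j (1:ℂ) : Fin K → ℂ) = Pi.single j (1:ℂ) := by
      funext k
      rcases eq_or_ne k j with h | h
      · subst h
        simp
      · simp [Pi.single_eq_of_ne h]
    rw [hDj, Matrix.diagonal_conjTranspose, hstar]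
  have hG'H : G'ᴴ = Dj * (G0ᴴ * Lmat N) := by
    rw [hG', Matrix.conjTranspose_mul, Matrix.conjTranspose_mul, hDjH,
      Matrix.conjTranspose_conjTranspose]
  have hDjv : ∀ w : Fin K → ℂ, Dj *ᵥ w = Pi.single j (w j) := by
    intro w
    funext k
    rw [hDj, Matrix.mulVec_diagonal]
    rcases eq_or_ne k j with h | h
    · subst h
      simp
    · simp [Pi.single_apply, h]
  have hsub : G'ᴴ *ᵥ zhat - m' *ᵥ β0
      = Pi.single j (((G0ᴴ * Lmat N * ((1 : Matrix (Fin N) (Fin N) ℂ) - Pmat G0)) *ᵥ zhat) j)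
        - (G0ᴴ * (Lmat N)ᴴ * G0) *ᵥ Pi.single j (β0 j) := by
    rw [hm', Matrix.add_mulVec, hG'H, hG', Pmat]
    simp only [Matrix.sub_mulVec, Matrix.one_mulVec, ← Matrix.mulVec_mulVec]
    rw [hDjv, hDjv, hDjv]
    simp only [Matrix.mulVec_sub, Pi.sub_apply, Pi.single_sub]
    abel
  -- conclude
  have hcol : (fun i => JmatBt N K ghat zhat (fun i' => ρ₀ i') i j) = d := by
    funext i
    rw [hdval, hsub]
    simp only [JmatBt]
    rw [← hG0, ← hβ0def]
    rw [Matrix.mulVec_sub, Matrix.mulVec_mulVec]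
    rw [Matrix.sub_apply, Matrix.mul_diagonal, Matrix.mul_diagonal]
    rw [Matrix.mulVec_single, Matrix.mulVec_single]
    rw [pinv, ← hM0]
    simp only [Pi.sub_apply, Matrix.mul_assoc, Pi.smul_apply, op_smul_eq_mul, Matrix.col_apply]
  rw [hcol]
  exact hd

/-- explicit formula for the Jacobian of the least-squares coefficients
`β̃(ρ) = G_ρ†ẑ`. -/
theorem stmt17
    (fC K : ℕ) (ghat : ℤ → ℂ) (zhat : Fin (2*fC+1) → ℂ)
    (ρ₀ : EuclideanSpace ℝ (Fin K))
    (hrank : (Gmat (2*fC+1) K ghat (fun i => ρ₀ i)).rank = K) :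
    DifferentiableAt ℝ
      (fun ρ : EuclideanSpace ℝ (Fin K) =>
        pinv (Gmat (2*fC+1) K ghat (fun i => ρ i)) *ᵥ zhat) ρ₀ ∧
    ∀ j : Fin K,
      HasDerivAt
        (fun s : ℝ =>
          pinv (Gmat (2*fC+1) K ghat
            (fun i => (ρ₀ + s • EuclideanSpace.single j (1:ℝ)) i)) *ᵥ zhat)
        (fun i => JmatBt (2*fC+1) K ghat zhat (fun i' => ρ₀ i') i j)
        0 :=
  stmt17_aux (2*fC+1) K ghat zhat ρ₀ hrank
end
end

section
/- For every σ ∈ (0, 1/2), the sum over positive integers i with i·σ ≤ 1/2 satisfies Σ_{0 < iσ ≤ 1/2} 1/sin(πiσ) ≤ 1/sin(πσ) + √(cot(πσ)) / (σ·√(2π)). In particular, if σ = c/N with c = c(N) = o(N), then there is a constant C such that Σ_{0 < iσ ≤ 1/2} 1/sin(πiσ) ≤ C·(N/c)^{3/2} for all sufficiently large N. -/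
open scoped Real BigOperators
open Filter

set_option maxHeartbeats 1000000 in
noncomputable section
set_option maxHeartbeats 1000000

lemma part1 (σ : ℝ) (hσ : σ ∈ Set.Ioo (0:ℝ) (1/2)) :
    ∑ i ∈ Finset.Icc 1 ⌊1/(2*σ)⌋₊, 1 / Real.sin (Real.pi * i * σ)
      ≤ 1 / Real.sin (Real.pi * σ) +
          Real.sqrt (Real.cos (Real.pi * σ) / Real.sin (Real.pi * σ)) /
            (σ * Real.sqrt (2 * Real.pi)) := by
  obtain ⟨hσ0, hσ2⟩ := hσ
  have hπ := Real.pi_pos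
  set M := ⌊1/(2*σ)⌋₊ with hMdef
  have hMle : (M : ℝ) ≤ 1/(2*σ) := Nat.floor_le (by positivity)
  -- helper: for 0 < r ≤ 1/(2σ), π r σ ≤ π/2 and sin (π r σ) > 0
  have hub : ∀ r : ℝ, 0 < r → r ≤ 1/(2*σ) →
      Real.pi * r * σ ≤ Real.pi/2 ∧ 0 < Real.sin (Real.pi * r * σ) := by
    intro r hr0 hr
    have h1 : Real.pi * r * σ ≤ Real.pi/2 := by
      have : (Real.pi*σ)*r ≤ (Real.pi*σ)*(1/(2*σ)) :=
        mul_le_mul_of_nonneg_left hr (by positivity)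
      have h2 : (Real.pi*σ)*(1/(2*σ)) = Real.pi/2 := by field_simp
      nlinarith
    exact ⟨h1, Real.sin_pos_of_pos_of_lt_pi (by positivity) (by linarith)⟩
  have hs1 : 0 < Real.sin (Real.pi * σ) := by
    apply Real.sin_pos_of_pos_of_lt_pi (by positivity); nlinarith
  have hcos0 : 0 ≤ Real.cos (Real.pi * σ) := by
    apply Real.cos_nonneg_of_mem_Icc; constructor <;> nlinarith
  have hcot0 : 0 ≤ Real.cos (Real.pi*σ) / Real.sin (Real.pi*σ) := div_nonneg hcos0 hs1.le
  have hrhs2 : 0 ≤ Real.sqrt (Real.cos (Real.pi*σ) / Real.sin (Real.pi*σ)) /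
      (σ * Real.sqrt (2 * Real.pi)) := by positivity
  rcases Nat.lt_or_ge M 2 with hM2 | hM2
  · -- M = 0 or 1
    interval_cases M
    · rw [show Finset.Icc 1 0 = (∅ : Finset ℕ) by simp, Finset.sum_empty]
      positivity
    · simp only [Finset.Icc_self, Finset.sum_singleton, Nat.cast_one, mul_one]
      linarith
  · -- main case, M ≥ 2
    have hσ4 : σ ≤ 1/4 := by
      have h2 : (2:ℝ) ≤ 1/(2*σ) := le_trans (by exact_mod_cast hM2) hMle
      rw [le_div_iff₀ (by positivity)] at h2; linarith
    -- split off the first term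
    have hins : Finset.Icc 1 M = insert 1 (Finset.Icc 2 M) := by
      ext x; simp only [Finset.mem_Icc, Finset.mem_insert]; omega
    rw [hins, Finset.sum_insert (by simp)]
    have h1t : Real.pi * ((1:ℕ):ℝ) * σ = Real.pi * σ := by push_cast; ring
    rw [h1t]
    refine add_le_add le_rfl ?_
    -- the tail sum S
    set S := ∑ i ∈ Finset.Icc 2 M, 1 / Real.sin (Real.pi * i * σ) with hSdef
    have hS0 : 0 ≤ S := by
      apply Finset.sum_nonneg
      intro i hi
      simp only [Finset.mem_Icc] at hi
      have hi1 : (2:ℝ) ≤ (i:ℝ) := by exact_mod_cast hi.1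
      have := (hub i (by linarith) (le_trans (by exact_mod_cast hi.2) hMle)).2
      positivity
    -- notation
    set s1 := Real.sin (Real.pi * σ) with hs1def
    set cot := Real.cos (Real.pi * σ) / s1 with hcotdef
    -- telescoping function
    set f : ℕ → ℝ := fun k =>
      Real.cos (Real.pi * ((k:ℝ)+1) * σ) / Real.sin (Real.pi * ((k:ℝ)+1) * σ) with hfdef
    -- per-term telescoping bound
    have hstep : ∀ k ∈ Finset.range (M-1),
        (1 / Real.sin (Real.pi * ((2+k : ℕ):ℝ) * σ))^2 ≤ (f k - f (k+1)) / s1 := by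
      intro k hk
      rw [Finset.mem_range] at hk
      have hkM : (k:ℝ) + 2 ≤ (M:ℝ) := by exact_mod_cast (show (k + 2 : ℕ) ≤ M by omega)
      have ha := hub ((k:ℝ)+1) (by positivity) (by linarith [hMle])
      have hb := hub ((k:ℝ)+2) (by positivity) (by linarith [hMle])
      set a := Real.pi * ((k:ℝ)+1) * σ with hadef
      set b := Real.pi * ((k:ℝ)+2) * σ with hbdef
      have hab : a < b := by
        rw [hadef, hbdef]; nlinarith
      have ha0 : 0 < a := by rw [hadef]; positivity
      have hsinab : Real.sin a ≤ Real.sin b := by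
        apply (Real.strictMonoOn_sin ⟨by linarith, by linarith [ha.1, hb.1]⟩
          ⟨by linarith [ha0], hb.1⟩ hab).le
      have hcast : ((2+k : ℕ):ℝ) = (k:ℝ)+2 := by push_cast; ring
      have hbarg : Real.pi * ((2+k : ℕ):ℝ) * σ = b := by rw [hcast, hbdef]
      rw [hbarg]
      have hfk1 : f (k+1) = Real.cos b / Real.sin b := by
        have h : Real.pi * (((k+1:ℕ):ℝ)+1) * σ = b := by push_cast [hbdef]; ring
        simp only [hfdef]
        rw [h]
      have hfk : f k = Real.cos a / Real.sin a := rfl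
      have hid : f k - f (k+1) = s1 / (Real.sin a * Real.sin b) := by
        rw [hfk, hfk1, div_sub_div _ _ (ne_of_gt ha.2) (ne_of_gt hb.2)]
        congr 1
        rw [hs1def, show Real.pi * σ = b - a by rw [hadef, hbdef]; ring, Real.sin_sub]
        ring
      calc (1 / Real.sin b)^2 = 1 / (Real.sin b * Real.sin b) := by
            rw [div_pow, one_pow, sq]
        _ ≤ 1 / (Real.sin a * Real.sin b) :=
            one_div_le_one_div_of_le (mul_pos ha.2 hb.2)
              (mul_le_mul_of_nonneg_right hsinab hb.2.le)
        _ = s1 / (Real.sin a * Real.sin b) / s1 := by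
            rw [div_right_comm, div_self (ne_of_gt hs1)]
        _ = (f k - f (k+1)) / s1 := by rw [hid]
    -- the telescoped sum of squares
    have hsq : ∑ i ∈ Finset.Icc 2 M, (1 / Real.sin (Real.pi * i * σ))^2 ≤ cot / s1 := by
      have hIcc : Finset.Icc 2 M = Finset.Ico 2 (M+1) := by rw [Finset.Ico_add_one_right_eq_Icc]
      rw [hIcc, Finset.sum_Ico_eq_sum_range, show M + 1 - 2 = M - 1 by omega]
      calc ∑ k ∈ Finset.range (M-1), (1 / Real.sin (Real.pi * ((2+k : ℕ):ℝ) * σ))^2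
          ≤ ∑ k ∈ Finset.range (M-1), (f k - f (k+1)) / s1 := Finset.sum_le_sum hstep
        _ = (∑ k ∈ Finset.range (M-1), (f k - f (k+1))) / s1 := by rw [Finset.sum_div]
        _ = (f 0 - f (M-1)) / s1 := by rw [Finset.sum_range_sub' f (M-1)]
        _ ≤ f 0 / s1 := by
            have hMc : ((M-1:ℕ):ℝ) = (M:ℝ) - 1 := by
              rw [Nat.cast_sub (by omega : 1 ≤ M)]; simp
            have hM0 : (0:ℝ) < (M:ℝ) := by
              exact_mod_cast (show 0 < M by omega)
            have h := hub (M:ℝ) hM0 hMle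
            have hfM : 0 ≤ f (M-1) := by
              have harg : Real.pi * (((M-1:ℕ):ℝ)+1) * σ = Real.pi * (M:ℝ) * σ := by
                rw [hMc]; ring
              simp only [hfdef]
              rw [harg]
              exact div_nonneg (Real.cos_nonneg_of_mem_Icc
                ⟨by nlinarith [mul_pos (mul_pos hπ hM0) hσ0], h.1⟩) h.2.le
            gcongr
            linarith
        _ = cot / s1 := by
            have hf0 : f 0 = cot := by
              simp only [hfdef, hcotdef, hs1def]
              norm_num
            rw [hf0]
    -- Cauchy–Schwarz
    have hcard : ((Finset.Icc 2 M).card : ℝ) = (M:ℝ) - 1 := by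
      rw [Nat.card_Icc, show M + 1 - 2 = M - 1 by omega,
        Nat.cast_sub (by omega : 1 ≤ M)]
      simp
    have hcs := sq_sum_le_card_mul_sum_sq (s := Finset.Icc 2 M)
      (f := fun i : ℕ => 1 / Real.sin (Real.pi * i * σ))
    -- lower bound for sin (πσ)
    have hπlt : Real.pi < 3.15 := Real.pi_lt_d2
    have hx1 : Real.pi * σ ≤ 1 := by nlinarith
    have hcube := Real.sin_gt_sub_cube (by positivity : 0 < Real.pi * σ)
    have hπsq : Real.pi^2 ≤ 10 := by nlinarith
    have hp2 : Real.pi^2 * σ ≤ 8 := by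
      nlinarith [mul_nonneg (by linarith : (0:ℝ) ≤ 10 - Real.pi^2) hσ0.le]
    have hsin_lb : Real.pi * σ - 2 * Real.pi * σ^2 ≤ s1 := by
      rw [hs1def]
      nlinarith [mul_nonneg (mul_nonneg hπ.le (sq_nonneg σ)) (sub_nonneg.2 hp2)]
    have hs1' : s1 ≠ 0 := ne_of_gt hs1
    have hMb : ((M:ℝ) - 1) * (cot / s1) ≤ cot / (2 * Real.pi * σ^2) := by
      have hmul := mul_le_mul_of_nonneg_right hMle
        (le_of_lt (show (0:ℝ) < 2*Real.pi*σ^2 by positivity))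
      have he : (1/(2*σ)) * (2*Real.pi*σ^2) = Real.pi * σ := by field_simp
      rw [he] at hmul
      have hM1 : ((M:ℝ) - 1) * (2*Real.pi*σ^2) ≤ s1 := by nlinarith [hmul, hsin_lb]
      calc ((M:ℝ)-1) * (cot/s1) ≤ (s1/(2*Real.pi*σ^2)) * (cot/s1) := by
            apply mul_le_mul_of_nonneg_right _ (div_nonneg hcot0 hs1.le)
            rw [le_div_iff₀ (by positivity)]
            exact hM1
        _ = cot / (2*Real.pi*σ^2) := by
            field_simp
    have hsum_sq : S^2 ≤ cot / (2*Real.pi*σ^2) := by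
      have hM2' : (2:ℝ) ≤ (M:ℝ) := by exact_mod_cast hM2
      calc S^2 ≤ ((Finset.Icc 2 M).card : ℝ) *
            ∑ i ∈ Finset.Icc 2 M, (1 / Real.sin (Real.pi * i * σ))^2 := by
            rw [hSdef]; exact_mod_cast hcs
        _ = ((M:ℝ)-1) * ∑ i ∈ Finset.Icc 2 M, (1 / Real.sin (Real.pi * i * σ))^2 := by
            rw [hcard]
        _ ≤ ((M:ℝ)-1) * (cot/s1) :=
            mul_le_mul_of_nonneg_left hsq (by linarith)
        _ ≤ cot/(2*Real.pi*σ^2) := hMb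
    have hfin : S ≤ Real.sqrt (cot/(2*Real.pi*σ^2)) := by
      calc S = Real.sqrt (S^2) := (Real.sqrt_sq hS0).symm
        _ ≤ _ := Real.sqrt_le_sqrt hsum_sq
    refine hfin.trans (le_of_eq ?_)
    rw [show 2*Real.pi*σ^2 = σ^2*(2*Real.pi) by ring, Real.sqrt_div hcot0,
      Real.sqrt_mul (sq_nonneg σ), Real.sqrt_sq hσ0.le]

/-- the elementary sum estimate `Σ 1/sin(πiσ) ≲ (N/c)^{3/2}`. -/
theorem stmt18 :
    (∀ σ : ℝ, σ ∈ Set.Ioo (0:ℝ) (1/2) →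
      ∑ i ∈ Finset.Icc 1 ⌊1/(2*σ)⌋₊, 1 / Real.sin (Real.pi * i * σ)
        ≤ 1 / Real.sin (Real.pi * σ) +
            Real.sqrt (Real.cos (Real.pi * σ) / Real.sin (Real.pi * σ)) /
              (σ * Real.sqrt (2 * Real.pi))) ∧
    (∀ c : ℕ → ℝ, (∀ N, 0 < c N) →
      Tendsto (fun N : ℕ => c N / N) atTop (nhds 0) →
      ∃ C : ℝ, 0 < C ∧ ∃ N₀ : ℕ, ∀ N : ℕ, N₀ ≤ N →
        ∑ i ∈ Finset.Icc 1 ⌊1/(2*(c N / N))⌋₊, 1 / Real.sin (Real.pi * i * (c N / N))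
          ≤ C * ((N : ℝ) / c N) ^ ((3:ℝ)/2)) := by
  constructor
  · exact part1
  · intro c hc hlim
    refine ⟨1, one_pos, ?_⟩
    have hev : ∀ᶠ N : ℕ in atTop, c N / (N:ℝ) < 1/2 :=
      hlim.eventually_lt_const (by norm_num)
    obtain ⟨N₀, hN₀⟩ := Filter.eventually_atTop.mp (hev.and (Filter.eventually_ge_atTop 1))
    refine ⟨N₀, fun N hN => ?_⟩
    obtain ⟨hhalf, hN1⟩ := hN₀ N hN
    set σ := c N / (N:ℝ) with hσdef
    have hN0 : (0:ℝ) < N := by exact_mod_cast hN1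
    have hσ0 : 0 < σ := div_pos (hc N) hN0
    have key := part1 σ ⟨hσ0, hhalf⟩
    refine key.trans ?_
    rw [one_mul]
    have hTeq : ((N:ℝ)/c N) = 1/σ := by rw [hσdef, one_div_div]
    rw [hTeq]
    have hπ := Real.pi_pos
    have hs1 : 2*σ ≤ Real.sin (Real.pi*σ) := by
      have h := Real.mul_le_sin (x := Real.pi*σ) (by positivity) (by nlinarith)
      have he : 2/Real.pi*(Real.pi*σ) = 2*σ := by field_simp
      rw [he] at h
      exact h
    have hs1p : 0 < Real.sin (Real.pi*σ) := lt_of_lt_of_le (by positivity) hs1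
    have hA : 1/Real.sin (Real.pi*σ) ≤ 1/(2*σ) :=
      one_div_le_one_div_of_le (by positivity) hs1
    have hcot : Real.cos (Real.pi*σ)/Real.sin (Real.pi*σ) ≤ 1/(2*σ) := by
      refine le_trans ?_ hA
      gcongr
      exact Real.cos_le_one _
    have hT0 : (0:ℝ) < 1/σ := by positivity
    set u := Real.sqrt (1/σ) with hudef
    have h1σ : (1:ℝ) ≤ 1/σ := by rw [le_div_iff₀ hσ0]; linarith
    have hTsq1 : 1 ≤ u := by
      rw [hudef]
      calc (1:ℝ) = Real.sqrt 1 := Real.sqrt_one.symm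
        _ ≤ Real.sqrt (1/σ) := Real.sqrt_le_sqrt h1σ
    have hrpow : (1/σ) ^ ((3:ℝ)/2) = (1/σ) * u := by
      rw [hudef, show (3:ℝ)/2 = 1 + 1/2 by norm_num, Real.rpow_add hT0,
        Real.rpow_one, ← Real.sqrt_eq_rpow]
    rw [hrpow]
    have hsqrtπ : 1 ≤ Real.sqrt Real.pi := by
      calc (1:ℝ) = Real.sqrt 1 := Real.sqrt_one.symm
        _ ≤ Real.sqrt Real.pi := Real.sqrt_le_sqrt (by nlinarith [Real.pi_gt_three])
    have hup : Real.sqrt (Real.cos (Real.pi*σ)/Real.sin (Real.pi*σ)) ≤ u/Real.sqrt 2 := by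
      have h1 := Real.sqrt_le_sqrt hcot
      rw [show (1:ℝ)/(2*σ) = (1/σ)/2 by ring, Real.sqrt_div (le_of_lt hT0)] at h1
      exact h1
    have h22 : Real.sqrt 2 * Real.sqrt 2 = 2 := Real.mul_self_sqrt (by norm_num)
    have hterm2 : Real.sqrt (Real.cos (Real.pi*σ)/Real.sin (Real.pi*σ)) /
        (σ*Real.sqrt (2*Real.pi)) ≤ (1/σ)*u/2 := by
      have hden : 0 < σ*Real.sqrt (2*Real.pi) := by positivity
      calc Real.sqrt (Real.cos (Real.pi*σ)/Real.sin (Real.pi*σ)) / (σ*Real.sqrt (2*Real.pi))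
          ≤ (u/Real.sqrt 2) / (σ*Real.sqrt (2*Real.pi)) :=
            (div_le_div_iff_of_pos_right hden).mpr hup
        _ = u / (2*σ*Real.sqrt Real.pi) := by
            rw [Real.sqrt_mul (by norm_num : (0:ℝ) ≤ 2), div_div]
            congr 1
            linear_combination (σ*Real.sqrt Real.pi) * h22
        _ ≤ u / (2*σ*1) := by
            have hle : 2*σ*1 ≤ 2*σ*Real.sqrt Real.pi := by nlinarith
            have h2σ : (0:ℝ) < 2*σ*1 := by nlinarith
            exact div_le_div_of_nonneg_left (Real.sqrt_nonneg (1/σ)) h2σ hle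
        _ = (1/σ)*u/2 := by ring
    have hterm1 : 1/Real.sin (Real.pi*σ) ≤ (1/σ)*u/2 := by
      refine hA.trans ?_
      have hhe : 1/(2*σ) = (1/σ)/2 := by ring
      rw [hhe]
      nlinarith [mul_le_mul_of_nonneg_left hTsq1 hT0.le]
    linarith [hterm1, hterm2]
end
end

section
/- Let N = 2f_C+1, c = c(N) > 0, σ = c/N < 1/2, and suppose the kernel g_{σ,N} satisfies the decay bound |g_{σ,N}(t)| ≤ C₀·e^{-κc}/(√N·sin(πt)) for all σ ≤ t ≤ 1/2, together with g_{σ,N}(t) = g_{σ,N}(1−t). Let τ ∈ 𝕀^K satisfy sep(τ) ≥ 2σ and let α ∈ ℝ^K. Then there exist constants 0 < a ≤ b and C, C' > 0 such that for every c with a·log N ≤ c ≤ b·log N, all sufficiently large N, and every t ∈ 𝕀 with min_{i} d(t, τ[i]) ≥ σ: |Σ_{i=1}^K α[i]·g_{σ,N}(t⊖τ[i])| ≤ ‖α‖_∞ · C·N·e^{-C'c}, and in particular this bound can be made at most ‖α‖_∞·e^{-C''c} for a constant C'' > 0 when the lower bound a is large enough. -/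
open scoped Real BigOperators
open Matrix MeasureTheory Filter

noncomputable section

set_option maxHeartbeats 2000000 in
/-- the filtered signal is small away from the impulses. -/
theorem stmt19
    (K : ℕ) (hK : 0 < K)
    (g : ℕ → ℝ → ℝ → ℝ) (C₀ κ : ℝ) (hC₀ : 0 < C₀) (hκ : 0 < κ)
    (hker : ∀ (fC : ℕ) (c : ℝ), 0 < c → c / (2*fC+1 : ℕ) < 1/2 →
      (∀ t : ℝ, c / (2*fC+1 : ℕ) ≤ t → t ≤ 1/2 →
        |g (2*fC+1) c t| ≤ C₀ * Real.exp (-(κ * c)) /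
          (Real.sqrt (2*fC+1 : ℕ) * Real.sin (Real.pi * t))) ∧
      (∀ t ∈ Set.Ico (0:ℝ) 1, g (2*fC+1) c t = g (2*fC+1) c (1 - t)))
    (τ : Fin K → ℝ) (hτ : ∀ i, τ i ∈ Set.Ico (0:ℝ) 1)
    (α : Fin K → ℝ) :
    ∃ a b C C' C'' : ℝ, 0 < a ∧ a ≤ b ∧ 0 < C ∧ 0 < C' ∧ 0 < C'' ∧
      ∃ N₀ : ℕ, ∀ fC : ℕ, N₀ ≤ fC →
      ∀ c : ℝ, a * Real.log (2*fC+1 : ℕ) ≤ c → c ≤ b * Real.log (2*fC+1 : ℕ) →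
        c / (2*fC+1 : ℕ) < 1/2 →
        (∀ i j, i ≠ j → 2 * (c / (2*fC+1 : ℕ)) ≤ wrapDist (τ i) (τ j)) →
        ∀ t ∈ Set.Ico (0:ℝ) 1, (∀ i, c / (2*fC+1 : ℕ) ≤ wrapDist t (τ i)) →
          |∑ i, α i * g (2*fC+1) c (wrapSub t (τ i))|
              ≤ rnormInf α * (C * (2*fC+1 : ℕ) * Real.exp (-(C' * c))) ∧
          |∑ i, α i * g (2*fC+1) c (wrapSub t (τ i))|
              ≤ rnormInf α * Real.exp (-(C'' * c)) := by
  have hK' : (0:ℝ) < K := by exact_mod_cast hK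
  refine ⟨1/κ, 1/κ, K*C₀, κ, κ/4, by positivity, le_rfl, by positivity, hκ, by positivity,
    ⌈Real.exp κ + (max 1 ((K:ℝ)*C₀))^4⌉₊, ?_⟩
  intro fC hfC c hca _hcb hσhalf _hsep t _ht hfar
  set M : ℝ := max 1 ((K:ℝ)*C₀) with hM
  have hM1 : (1:ℝ) ≤ M := le_max_left _ _
  have hM0 : (0:ℝ) < M := lt_of_lt_of_le one_pos hM1
  set N : ℝ := ((2*fC+1 : ℕ) : ℝ) with hNdef
  have hfC' : Real.exp κ + M^4 ≤ (fC:ℝ) := by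
    calc Real.exp κ + M^4 ≤ (⌈Real.exp κ + M^4⌉₊ : ℝ) := Nat.le_ceil _
    _ ≤ (fC:ℝ) := by exact_mod_cast hfC
  have hNfC : (fC:ℝ) ≤ N := by rw [hNdef]; push_cast; linarith
  have hexpN : Real.exp κ ≤ N := by nlinarith [pow_nonneg hM0.le 4]
  have hNM : M^4 ≤ N := by nlinarith [Real.exp_pos κ]
  have hN0 : (0:ℝ) < N := lt_of_lt_of_le (Real.exp_pos κ) hexpN
  have hN1 : (1:ℝ) ≤ N := by
    rw [hNdef]; exact_mod_cast Nat.one_le_iff_ne_zero.2 (by omega)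
  have hlogN : κ ≤ Real.log N := (Real.le_log_iff_exp_le hN0).2 hexpN
  have hlogc : Real.log N ≤ κ * c := by
    have h := hca
    have : Real.log N = κ * (1/κ * Real.log N) := by field_simp
    rw [this]
    exact mul_le_mul_of_nonneg_left h hκ.le
  have hc1 : (1:ℝ) ≤ c := by
    have : κ * 1 ≤ κ * c := by linarith
    exact le_of_mul_le_mul_left this hκ
  have hc0 : (0:ℝ) < c := lt_of_lt_of_le one_pos hc1
  set σ : ℝ := c / N with hσdef
  have hσhalf' : σ < 1/2 := by rw [hσdef, hNdef]; exact hσhalf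
  have hσ0 : 0 < σ := by positivity
  have hsqrt0 : 0 < Real.sqrt N := Real.sqrt_pos.2 hN0
  have hsqrtsq : Real.sqrt N * Real.sqrt N = N := Real.mul_self_sqrt hN0.le
  have hsin0 : 0 < Real.sin (Real.pi * σ) := by
    apply Real.sin_pos_of_pos_of_lt_pi (by positivity)
    nlinarith [Real.pi_pos]
  set E : ℝ := Real.exp (-(κ * c)) with hE
  have hE0 : 0 < E := Real.exp_pos _
  set D : ℝ := Real.sqrt N * Real.sin (Real.pi * σ) with hD
  have hD0 : 0 < D := by positivity
  obtain ⟨hdec, hsym⟩ := hker fC c hc0 hσhalf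
  -- per-term bound
  have hgb : ∀ i, |g (2*fC+1) c (wrapSub t (τ i))| ≤ C₀ * E / D := by
    intro i
    set x : ℝ := wrapSub t (τ i) with hxdef
    have hx0 : 0 ≤ x := Int.fract_nonneg _
    have hx1 : x < 1 := Int.fract_lt_one _
    have hd : σ ≤ min x (1 - x) := by
      have hd0 : σ ≤ wrapDist t (τ i) := by rw [hσdef, hNdef]; exact hfar i
      have hxne : Int.fract (t - τ i) ≠ 0 := by
        intro h
        have : wrapDist t (τ i) ≤ 0 := by
          unfold wrapDist wrapSub
          exact le_trans (min_le_left _ _) (le_of_eq h)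
        linarith
      have hflip : wrapSub (τ i) t = 1 - x := by
        unfold wrapSub
        rw [show τ i - t = -(t - τ i) by ring, Int.fract_neg hxne]; rfl
      rw [wrapDist, hflip] at hd0
      exact hd0
    have hσx : σ ≤ x := le_trans hd (min_le_left _ _)
    have hσx' : σ ≤ 1 - x := le_trans hd (min_le_right _ _)
    have hmono : ∀ y : ℝ, σ ≤ y → y ≤ 1/2 →
        C₀ * E / (Real.sqrt N * Real.sin (Real.pi * y)) ≤ C₀ * E / D := by
      intro y h1 h2
      have hsy : Real.sin (Real.pi * σ) ≤ Real.sin (Real.pi * y) := by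
        apply Real.strictMonoOn_sin.monotoneOn
          ⟨by nlinarith [Real.pi_pos], by nlinarith [Real.pi_pos]⟩
          ⟨by nlinarith [Real.pi_pos], by nlinarith [Real.pi_pos]⟩
          (by nlinarith [Real.pi_pos])
      apply div_le_div_of_nonneg_left (by positivity) hD0
      rw [hD]
      nlinarith [hsqrt0]
    by_cases hx : x ≤ 1/2
    · have h := hdec x hσx hx
      exact le_trans h (hmono x hσx hx)
    · have hsymx : g (2*fC+1) c x = g (2*fC+1) c (1 - x) := hsym x ⟨hx0, hx1⟩
      have h := hdec (1 - x) hσx' (by linarith)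
      rw [hsymx]
      exact le_trans h (hmono (1 - x) hσx' (by linarith))
  -- sup norm facts
  have hA : ∀ i, |α i| ≤ rnormInf α := by
    intro i
    unfold rnormInf
    exact le_ciSup (f := fun j => |α j|) (Set.Finite.bddAbove (Set.finite_range _)) i
  have hA0 : 0 ≤ rnormInf α := le_trans (abs_nonneg _) (hA ⟨0, hK⟩)
  -- sum bound
  have hsum : |∑ i, α i * g (2*fC+1) c (wrapSub t (τ i))|
      ≤ rnormInf α * ((K:ℝ) * (C₀ * E / D)) := by
    calc |∑ i, α i * g (2*fC+1) c (wrapSub t (τ i))|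
        ≤ ∑ i, |α i * g (2*fC+1) c (wrapSub t (τ i))| :=
          Finset.abs_sum_le_sum_abs _ _
      _ ≤ ∑ _i : Fin K, rnormInf α * (C₀ * E / D) := by
          apply Finset.sum_le_sum
          intro i _
          rw [abs_mul]
          exact mul_le_mul (hA i) (hgb i) (abs_nonneg _) hA0
      _ = rnormInf α * ((K:ℝ) * (C₀ * E / D)) := by
          rw [Finset.sum_const, Finset.card_univ, Fintype.card_fin, nsmul_eq_mul]; ring
  -- lower bound on D
  have hDlb : 2 * c / Real.sqrt N ≤ D := by
    have hs2 : 2 * σ ≤ Real.sin (Real.pi * σ) := by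
      have h := Real.mul_le_sin (x := Real.pi * σ) (by positivity)
        (by nlinarith [Real.pi_pos])
      have : 2 / Real.pi * (Real.pi * σ) = 2 * σ := by
        field_simp
      linarith [this ▸ h]
    rw [hD]
    have : 2 * c / Real.sqrt N = Real.sqrt N * (2 * σ) := by
      rw [hσdef]; field_simp; nlinarith [hsqrtsq]
    rw [this]
    nlinarith [hsqrt0]
  have hB : C₀ * E / D ≤ C₀ * E * Real.sqrt N / (2 * c) := by
    have h1 : C₀ * E / D ≤ C₀ * E / (2 * c / Real.sqrt N) :=
      div_le_div_of_nonneg_left (by positivity) (by positivity) hDlb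
    have h2 : C₀ * E / (2 * c / Real.sqrt N) = C₀ * E * Real.sqrt N / (2 * c) := by
      field_simp
    linarith [h2 ▸ h1]
  have h1s : (1:ℝ) ≤ Real.sqrt N := Real.one_le_sqrt.2 hN1
  have hsqN : Real.sqrt N ≤ N := by nlinarith [hsqrtsq]
  -- first bound
  have hb1 : (K:ℝ) * (C₀ * E * Real.sqrt N / (2 * c)) ≤ (K:ℝ) * C₀ * N * E := by
    have h1 : C₀ * E * Real.sqrt N / (2 * c) ≤ C₀ * E * Real.sqrt N :=
      div_le_self (by positivity) (by linarith)
    have h2 : C₀ * E * Real.sqrt N ≤ C₀ * N * E := by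
      calc C₀ * E * Real.sqrt N ≤ C₀ * E * N :=
            mul_le_mul_of_nonneg_left hsqN (mul_nonneg hC₀.le hE0.le)
        _ = C₀ * N * E := by ring
    calc (K:ℝ) * (C₀ * E * Real.sqrt N / (2 * c))
        ≤ (K:ℝ) * (C₀ * E * Real.sqrt N) := mul_le_mul_of_nonneg_left h1 hK'.le
      _ ≤ (K:ℝ) * (C₀ * N * E) := mul_le_mul_of_nonneg_left h2 hK'.le
      _ = (K:ℝ) * C₀ * N * E := by ring
  -- second bound
  have hsqle : Real.sqrt N ≤ Real.exp (κ * c / 2) := by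
    have hNle : N ≤ Real.exp (κ * c) := by
      rw [← Real.exp_log hN0]
      exact Real.exp_le_exp.2 hlogc
    have : Real.exp (κ * c) = (Real.exp (κ * c / 2))^2 := by
      rw [sq, ← Real.exp_add]; ring_nf
    calc Real.sqrt N ≤ Real.sqrt (Real.exp (κ * c)) := Real.sqrt_le_sqrt hNle
      _ = Real.exp (κ * c / 2) := by rw [this, Real.sqrt_sq (Real.exp_pos _).le]
  have hMle : M ≤ Real.exp (κ * c / 4) := by
    have h4 : 4 * Real.log M ≤ Real.log N := by
      have := Real.log_le_log (by positivity) hNM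
      rwa [Real.log_pow, Nat.cast_ofNat] at this
    have hlM : Real.log M ≤ κ * c / 4 := by linarith
    calc M = Real.exp (Real.log M) := (Real.exp_log hM0).symm
      _ ≤ Real.exp (κ * c / 4) := Real.exp_le_exp.2 hlM
  have hb2 : (K:ℝ) * (C₀ * E * Real.sqrt N / (2 * c)) ≤ Real.exp (-(κ/4 * c)) := by
    have h1 : C₀ * E * Real.sqrt N / (2 * c) ≤ C₀ * E * Real.sqrt N :=
      div_le_self (by positivity) (by linarith)
    have h2 : (K:ℝ) * (C₀ * E * Real.sqrt N) ≤ M * (E * Real.exp (κ * c / 2)) := by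
      have hKC : (K:ℝ) * C₀ ≤ M := le_max_right _ _
      have := mul_le_mul hKC (mul_le_mul_of_nonneg_left hsqle hE0.le)
        (by positivity) hM0.le
      nlinarith [hE0.le, hsqrt0.le, hC₀.le, hK'.le]
    have h3 : M * (E * Real.exp (κ * c / 2)) ≤ Real.exp (-(κ/4 * c)) := by
      have := mul_le_mul_of_nonneg_right hMle (by positivity :
        (0:ℝ) ≤ E * Real.exp (κ * c / 2))
      have heq : Real.exp (κ * c / 4) * (E * Real.exp (κ * c / 2))
          = Real.exp (-(κ/4 * c)) := by
        rw [hE, ← Real.exp_add, ← Real.exp_add]; ring_nf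
      linarith [heq ▸ this]
    calc (K:ℝ) * (C₀ * E * Real.sqrt N / (2 * c))
        ≤ (K:ℝ) * (C₀ * E * Real.sqrt N) := by
          exact mul_le_mul_of_nonneg_left h1 hK'.le
      _ ≤ M * (E * Real.exp (κ * c / 2)) := h2
      _ ≤ Real.exp (-(κ/4 * c)) := h3
  have hmid : |∑ i, α i * g (2*fC+1) c (wrapSub t (τ i))|
      ≤ rnormInf α * ((K:ℝ) * (C₀ * E * Real.sqrt N / (2 * c))) :=
    le_trans hsum (mul_le_mul_of_nonneg_left
      (mul_le_mul_of_nonneg_left hB hK'.le) hA0)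
  constructor
  · refine le_trans hmid ?_
    exact mul_le_mul_of_nonneg_left hb1 hA0
  · exact le_trans hmid (mul_le_mul_of_nonneg_left hb2 hA0)
end
end
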